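/- Let T be an alternating base tree, t a vertex with orthodox parity odd, t' a child of t such that {t,t'} ∉ M, and e any edge incident to a vertex of the subtree T(t'). Then vlevel(e) > vlevel(e*(t)), where e*(t) is a minimum-level incoming edge of T(t). -/

import Mathlib

open SimpleGraph
open scoped Classical

variable {V : Type*} [Fintype V] [DecidableEq V]

/-- A matching system `(G, M)` in which a super free vertex `f` has been added:
`U` is the set of free vertices of the original system, and for each `u ∈ U`
the vertex `mid u` forms the length-two alternating path `f - mid u - u`
(with `{f, mid u} ∉ M` and `{mid u, u} ∈ M`).  After the addition, `f` is the
unique free vertex. -/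
structure Sys (V : Type*) [Fintype V] [DecidableEq V] where
  G : SimpleGraph V
  M : Set (Sym2 V)
  f : V
  U : Set V
  mid : V → V
  M_sub : M ⊆ G.edgeSet
  matching : ∀ v : V, ∀ e₁ ∈ M, ∀ e₂ ∈ M, v ∈ e₁ → v ∈ e₂ → e₁ = e₂
  f_free : ∀ e ∈ M, f ∉ e
  others_matched : ∀ v : V, v ≠ f → ∃ e ∈ M, v ∈ e
  U_spec : ∀ u ∈ U, G.Adj f (mid u) ∧ s(f, mid u) ∉ M ∧ G.Adj (mid u) u ∧ s(mid u, u) ∈ M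
  mid_deg : ∀ u ∈ U, ∀ w : V, G.Adj (mid u) w → w = f ∨ w = u
  f_adj : ∀ w : V, G.Adj f w → ∃ u ∈ U, w = mid u
  mid_inj : ∀ u ∈ U, ∀ u' ∈ U, mid u = mid u' → u = u'

namespace Sys

variable (S : Sys V)

/-- An alternating path of the matching system: a simple path whose consecutive
edges alternate membership in `M`. -/
def IsAltPath {a b : V} (p : S.G.Walk a b) : Prop :=
  p.IsPath ∧ List.Chain' (fun e₁ e₂ => (e₁ ∈ S.M ↔ e₂ ∉ S.M)) p.edges

/-- `adist S θ u` is the length of a shortest alternating path from `f` to `u`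
whose length has parity `θ` (`true` = odd, `false` = even); `⊤` if none exists. -/
noncomputable def adist (θ : Bool) (u : V) : ℕ∞ :=
  sInf {n : ℕ∞ | ∃ p : S.G.Walk S.f u,
    S.IsAltPath p ∧ (p.length : ℕ∞) = n ∧ (Odd p.length ↔ θ = true)}

/-- The orthodox parity `α(u)` of `u`: the parity with smaller alternating distance. -/
noncomputable def op (u : V) : Bool :=
  if S.adist true u < S.adist false u then true else false

/-- The orthodox distance `dist^α(u)`. -/
noncomputable def distOrth (u : V) : ℕ∞ := S.adist (S.op u) u

/-- The unorthodox distance `dist^β(u)`. -/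
noncomputable def distUnorth (u : V) : ℕ∞ := S.adist (!S.op u) u

/-- `ρ(e)`: `true` (= odd) iff `e` is a matching edge. -/
noncomputable def rho (e : Sym2 V) : Bool := if e ∈ S.M then true else false

/-- `EP(u)`: the set of edges `e` incident to `u` such that some shortest orthodox
alternating path from `f` to `u` terminates with `e`. -/
def EP (u : V) : Set (Sym2 V) :=
  {e | ∃ p : S.G.Walk S.f u, S.IsAltPath p ∧ (p.length : ℕ∞) = S.distOrth u ∧
        p.edges.getLast? = some e}

/-- `P(u)`: the set of immediate predecessors of `u` on shortest orthodox
alternating paths. -/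
def Pset (u : V) : Set V := {u' | s(u', u) ∈ S.EP u}

/-- `EP = ⋃_u EP(u)`. -/
def EPall : Set (Sym2 V) := ⋃ u : V, S.EP u

/-- The volume `vlevel(e) = dist^{ρ(e)}(y) + dist^{ρ(e)}(z) + 1` of an edge `e = {y,z}`. -/
noncomputable def vlevel (e : Sym2 V) : ℕ∞ :=
  Sym2.lift ⟨fun y z => S.adist (S.rho e) y + S.adist (S.rho e) z + 1,
    fun y z => by ring⟩ e

/-- The height `hlevel(e) = max (dist^{ρ(e)}(y)) (dist^{ρ(e)}(z))` of an edge `e = {y,z}`. -/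
noncomputable def hlevel (e : Sym2 V) : ℕ∞ :=
  Sym2.lift ⟨fun y z => max (S.adist (S.rho e) y) (S.adist (S.rho e) z),
    fun y z => max_comm _ _⟩ e

/-- The level `level(e) = n' · vlevel(e) + hlevel(e)` with `n' = |V| + 1 > |V|`,
giving the lexicographic order on (volume, height). -/
noncomputable def level (e : Sym2 V) : ℕ∞ :=
  ((Fintype.card V + 1 : ℕ) : ℕ∞) * S.vlevel e + S.hlevel e

/-- An augmenting path: an alternating path connecting two distinct vertices of `U`,
starting and ending with non-matching edges. -/
def IsAugPath {a b : V} (p : S.G.Walk a b) : Prop :=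
  S.IsAltPath p ∧ a ∈ S.U ∧ b ∈ S.U ∧ a ≠ b ∧
  (∀ e, p.edges.head? = some e → e ∉ S.M) ∧ (∀ e, p.edges.getLast? = some e → e ∉ S.M)

/-- The length of shortest augmenting paths of the system is `L`. -/
def ShortestAugLen (L : ℕ) : Prop :=
  (∃ a b : V, ∃ p : S.G.Walk a b, S.IsAugPath p ∧ p.length = L) ∧
  (∀ a b : V, ∀ p : S.G.Walk a b, S.IsAugPath p → L ≤ p.length)

/-- Vertices of the alternating base DAG `H`: all vertices except `f` and its neighbors. -/
def inH (v : V) : Prop := v ≠ S.f ∧ ¬ S.G.Adj S.f v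

/-- The edge relation of the alternating base DAG `H`: an edge from `u` to `v`
iff `v ∈ P(u)` (upward orientation); vertices of `U` are sinks. -/
def HStep (u v : V) : Prop := S.inH u ∧ S.inH v ∧ u ∉ S.U ∧ v ∈ S.Pset u

end Sys

/-- An alternating base tree of `S`: every non-root vertex has its parent chosen
from `P(u)`; the root is the super free vertex `f`. -/
structure ABT (S : Sys V) where
  par : V → V
  par_f : par S.f = S.f
  par_mem : ∀ u : V, u ≠ S.f → par u ∈ S.Pset u

namespace ABT

variable {S : Sys V} (T : ABT S)

/-- `v` belongs to the subtree `T(t)` rooted at `t`. -/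
def inSub (t v : V) : Prop := ∃ n : ℕ, T.par^[n] v = t

/-- `e` is a tree edge of `T`. -/
def IsTreeEdge (e : Sym2 V) : Prop := ∃ u : V, u ≠ S.f ∧ e = s(u, T.par u)

/-- `e` is an incoming edge of the subtree `T(t)`: a non-tree edge of `G` with
exactly one endpoint inside `T(t)`. -/
def Incoming (t : V) (e : Sym2 V) : Prop :=
  e ∈ S.G.edgeSet ∧ ¬ T.IsTreeEdge e ∧
  ∃ y z : V, e = s(y, z) ∧ T.inSub t z ∧ ¬ T.inSub t y

/-- `e` is a minimum-level incoming edge (MIE) of `T(t)`. -/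
def IsMIE (t : V) (e : Sym2 V) : Prop :=
  T.Incoming t e ∧ ∀ e', T.Incoming t e' → S.level e ≤ S.level e'

/-- `e` is a minimum-volume incoming edge of `T(t)`. -/
def IsMinVolIncoming (t : V) (e : Sym2 V) : Prop :=
  T.Incoming t e ∧ ∀ e', T.Incoming t e' → S.vlevel e ≤ S.vlevel e'

/-- The level of a path w.r.t. `T`: the maximum level of its non-tree edges
(`0` if it contains none). -/
noncomputable def pathLevel {a b : V} (p : S.G.Walk a b) : ℕ∞ :=
  sSup {x : ℕ∞ | ∃ e ∈ p.edges, ¬ T.IsTreeEdge e ∧ x = S.level e}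

/-- The volume of a path w.r.t. `T`: the maximum volume of its non-tree edges
(`0` if it contains none). -/
noncomputable def pathVlevel {a b : V} (p : S.G.Walk a b) : ℕ∞ :=
  sSup {x : ℕ∞ | ∃ e ∈ p.edges, ¬ T.IsTreeEdge e ∧ x = S.vlevel e}

end ABT

/-- An edge is crossable if its volume is `2ℓ+5` and some alternating base tree
puts its endpoints into subtrees rooted at two distinct free vertices. -/
def Sys.Crossable (S : Sys V) (ℓ : ℕ) (e : Sym2 V) : Prop :=
  S.vlevel e = ((2 * ℓ + 5 : ℕ) : ℕ∞) ∧
  ∃ T : ABT S, ∃ y z : V, e = s(y, z) ∧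
    ∃ uy ∈ S.U, ∃ uz ∈ S.U, uy ≠ uz ∧ T.inSub uy y ∧ T.inSub uz z

/-- `E*`: the set of crossable critical edges (crossable and not in `EP`). -/
def Sys.Estar (S : Sys V) (ℓ : ℕ) : Set (Sym2 V) :=
  {e | S.Crossable ℓ e ∧ e ∉ S.EPall}

/-- A (directed) path in the alternating base DAG `H`. -/
structure HPath (S : Sys V) where
  verts : List V
  ne : verts ≠ []
  chain : verts.Chain' S.HStep
  mem : ∀ v ∈ verts, S.inH v
  nodup : verts.Nodup

/-- The first vertex of an `H`-path. -/
def HPath.first {S : Sys V} (P : HPath S) : V := P.verts.head P.ne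

/-- The last vertex of an `H`-path. -/
def HPath.last {S : Sys V} (P : HPath S) : V := P.verts.getLast P.ne

/-- A double path `(P, Q, y, z)`: `{y,z} ∈ E*` and `P`, `Q` are vertex-disjoint
paths of `H` from `y` and `z` terminating at two distinct free vertices. -/
structure DoublePath (S : Sys V) (ℓ : ℕ) where
  P : HPath S
  Q : HPath S
  y : V
  z : V
  hy : P.first = y
  hz : Q.first = z
  he : s(y, z) ∈ S.Estar ℓ
  hPU : P.last ∈ S.U
  hQU : Q.last ∈ S.U
  hne : P.last ≠ Q.last
  hdisj : ∀ v ∈ P.verts, v ∉ Q.verts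

/-- `T` respects an `H`-path `P` if consecutive vertices of `P` are
child–parent pairs of `T`. -/
def ABT.RespectsPath {S : Sys V} (T : ABT S) (P : HPath S) : Prop :=
  P.verts.Chain' (fun u v => T.par u = v)

/-- `T` respects a double path if it respects both of its constituent paths. -/
def ABT.RespectsDP {S : Sys V} {ℓ : ℕ} (T : ABT S) (D : DoublePath S ℓ) : Prop :=
  T.RespectsPath D.P ∧ T.RespectsPath D.Q

/-- An in-tree of `H` rooted at a free vertex: every non-root vertex has a unique
outgoing `H`-edge inside the tree and all vertices reach the root.  (Paths ending
at a free vertex are a special case.) -/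
structure InTree (S : Sys V) where
  W : Set V
  root : V
  g : V → V
  root_W : root ∈ W
  root_U : root ∈ S.U
  step : ∀ v ∈ W, v ≠ root → S.HStep v (g v) ∧ g v ∈ W
  reach : ∀ v ∈ W, ∃ n : ℕ, g^[n] v = root


section Aux

open SimpleGraph Walk List

variable {V : Type*} [Fintype V] [DecidableEq V] (S : Sys V)

/-- The alternation relation on edges. -/
private abbrev AR (S : Sys V) : Sym2 V → Sym2 V → Prop :=
  fun e₁ e₂ => (e₁ ∈ S.M ↔ e₂ ∉ S.M)

private lemma alt_aux : ∀ (l₁ l₂ : List (Sym2 V)) (e : Sym2 V) (b : Prop),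
    List.Chain' (AR S) (l₁ ++ e :: l₂) →
    (∀ e₀ ∈ (l₁ ++ e :: l₂).head?, (e₀ ∈ S.M ↔ b)) →
    (e ∈ S.M ↔ (Odd l₁.length ↔ ¬ b))
  | [], l₂, e, b, _, hh => by
      have he := hh e (by simp)
      simp only [List.length_nil, Nat.odd_iff]
      constructor
      · intro h; simp; tauto
      · intro h; tauto
  | a :: l₁, l₂, e, b, hc, hh => by
      have ha : a ∈ S.M ↔ b := hh a (by simp)
      rw [List.cons_append, List.Chain', List.isChain_cons] at hc
      obtain ⟨hR, hc'⟩ := hc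
      have hh' : ∀ e₀ ∈ (l₁ ++ e :: l₂).head?, (e₀ ∈ S.M ↔ ¬ b) := by
        intro e₀ he₀
        have := hR e₀ he₀
        tauto
      have hI := alt_aux l₁ l₂ e (¬ b) hc' hh'
      have hodd : Odd (l₁.length + 1) ↔ ¬ Odd l₁.length := Nat.odd_add_one
      simp only [List.length_cons]
      rw [hodd]
      tauto

private lemma first_edge_mem {u : V} (p : (S.G).Walk S.f u) :
    ∀ e₀ ∈ p.edges.head?, S.f ∈ e₀ := by
  cases p with
  | nil => simp
  | cons h q =>
      intro e₀ he₀
      simp only [Walk.edges_cons, List.head?_cons, Option.mem_def, Option.some.injEq] at he₀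
      subst he₀
      exact Sym2.mem_mk_left _ _

/-- Parity of an edge in an alternating path from the super free vertex. -/
private lemma edge_parity {u : V} {p : (S.G).Walk S.f u} (halt : S.IsAltPath p)
    {l₁ l₂ : List (Sym2 V)} {e : Sym2 V} (hsplit : p.edges = l₁ ++ e :: l₂) :
    (e ∈ S.M ↔ Odd l₁.length) := by
  have hc : List.Chain' (AR S) (l₁ ++ e :: l₂) := by
    have := halt.2; rwa [hsplit] at this
  have hh : ∀ e₀ ∈ (l₁ ++ e :: l₂).head?, (e₀ ∈ S.M ↔ False) := by
    intro e₀ he₀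
    have hf : S.f ∈ e₀ := first_edge_mem S p e₀ (by rw [hsplit]; exact he₀)
    simp only [iff_false]
    exact fun hm => S.f_free e₀ hm hf
  have := alt_aux S l₁ l₂ e False hc hh
  tauto

private lemma getLast?_split {α : Type*} : ∀ {l : List α} {a : α},
    l.getLast? = some a → ∃ l', l = l' ++ [a]
  | [], a, h => by simp at h
  | [b], a, h => by
      simp only [List.getLast?_singleton, Option.some.injEq] at h
      exact ⟨[], by rw [h]; simp⟩
  | b :: c :: l, a, h => by
      rw [List.getLast?_cons_cons] at h
      obtain ⟨l', hl⟩ := getLast?_split h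
      exact ⟨b :: l', by rw [hl]; rfl⟩

private lemma walk_last_decomp {a u : V} (p : (S.G).Walk a u) (hp : p.length ≠ 0) :
    ∃ (w : V) (q : (S.G).Walk a w) (h : S.G.Adj w u),
      p = q.append (Walk.cons h Walk.nil) := by
  induction p with
  | nil => simp at hp
  | cons h q ih =>
      cases q with
      | nil => exact ⟨_, Walk.nil, h, by simp⟩
      | cons h' q' =>
          obtain ⟨w, r, hadj, hr⟩ := ih (by simp)
          exact ⟨w, Walk.cons h r, hadj, by rw [Walk.cons_append, ← hr]⟩

private lemma alt_of_append_left {w u : V} {q : (S.G).Walk S.f w} {r : (S.G).Walk w u}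
    (halt : S.IsAltPath (q.append r)) : S.IsAltPath q := by
  refine ⟨halt.1.of_append_left, ?_⟩
  have := halt.2
  rw [Walk.edges_append] at this
  exact (List.isChain_append.mp this).1

private lemma adist_le {θ : Bool} {u : V} {p : (S.G).Walk S.f u} (halt : S.IsAltPath p)
    (hpar : Odd p.length ↔ θ = true) : S.adist θ u ≤ p.length :=
  sInf_le ⟨p, halt, rfl, hpar⟩

private lemma adist_attain {θ : Bool} {u : V} (h : S.adist θ u ≠ ⊤) :
    ∃ p : (S.G).Walk S.f u, S.IsAltPath p ∧ ((p.length : ℕ∞) = S.adist θ u) ∧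
      (Odd p.length ↔ θ = true) := by
  have hne : {n : ℕ∞ | ∃ p : (S.G).Walk S.f u,
      S.IsAltPath p ∧ (p.length : ℕ∞) = n ∧ (Odd p.length ↔ θ = true)}.Nonempty := by
    by_contra h'
    rw [Set.not_nonempty_iff_eq_empty] at h'
    apply h
    unfold Sys.adist
    rw [h', sInf_empty]
  have hmem := csInf_mem hne
  obtain ⟨p, halt, hlen, hpar⟩ := hmem
  exact ⟨p, halt, hlen, hpar⟩

private lemma adist_lt_card {θ : Bool} {u : V} (h : S.adist θ u ≠ ⊤) :
    S.adist θ u < (Fintype.card V : ℕ∞) := by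
  obtain ⟨p, halt, hlen, -⟩ := adist_attain S h
  rw [← hlen]
  exact_mod_cast halt.1.length_lt

private lemma distOrth_le_adist (θ : Bool) (u : V) : S.distOrth u ≤ S.adist θ u := by
  unfold Sys.distOrth Sys.op
  split_ifs with h
  · cases θ
    · exact h.le
    · exact le_rfl
  · cases θ
    · exact le_rfl
    · exact le_of_not_gt h

private lemma distOrth_le_length {u : V} {p : (S.G).Walk S.f u} (halt : S.IsAltPath p) :
    S.distOrth u ≤ p.length := by
  by_cases ho : Odd p.length
  · exact le_trans (distOrth_le_adist S true u) (adist_le S halt (by simp [ho]))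
  · exact le_trans (distOrth_le_adist S false u) (adist_le S halt (by simp [ho]))

/-- The parent edge: an alternating path realizing `distOrth u` arriving via the parent. -/
private lemma par_edge (T : ABT S) {u : V} (hu : u ≠ S.f) :
    ∃ q : (S.G).Walk S.f (T.par u), S.IsAltPath q ∧
      (((q.length + 1 : ℕ) : ℕ∞) = S.distOrth u) ∧
      (s(T.par u, u) ∈ S.M ↔ Odd q.length) := by
  have hmem := T.par_mem u hu
  simp only [Sys.Pset, Sys.EP, Set.mem_setOf_eq] at hmem
  obtain ⟨p, halt, hlen, hlast⟩ := hmem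
  have hp0 : p.length ≠ 0 := by
    intro h0
    have : p.edges = [] := List.length_eq_zero_iff.mp (by rw [Walk.length_edges, h0])
    rw [this] at hlast
    simp at hlast
  obtain ⟨w, q, hadj, hpq⟩ := walk_last_decomp S p hp0
  have hedges : p.edges = q.edges ++ [s(w, u)] := by
    rw [hpq, Walk.edges_append, Walk.edges_cons, Walk.edges_nil]
  have hw : w = T.par u := by
    rw [hedges, List.getLast?_append_cons, List.getLast?_singleton] at hlast
    have := Option.some.inj hlast
    rw [Sym2.eq_iff] at this
    rcases this with ⟨h1, -⟩ | ⟨h1, h2⟩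
    · exact h1
    · exact absurd h1 (S.G.ne_of_adj hadj)
  subst hw
  have hqalt : S.IsAltPath q := alt_of_append_left S (hpq ▸ halt)
  have hlen' : p.length = q.length + 1 := by
    rw [hpq]; simp [Walk.length_append]
  refine ⟨q, hqalt, ?_, ?_⟩
  · rw [← hlen, hlen']
  · have := edge_parity S halt (l₁ := q.edges) (l₂ := []) (e := s(T.par u, u))
      (by rw [hedges])
    rwa [Walk.length_edges] at this

private lemma distOrth_ne_top (T : ABT S) {u : V} (hu : u ≠ S.f) : S.distOrth u ≠ ⊤ := by
  obtain ⟨q, -, hlen, -⟩ := par_edge S T hu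
  rw [← hlen]
  exact ENat.coe_ne_top _

private lemma distOrth_par_succ_le (T : ABT S) {u : V} (hu : u ≠ S.f) :
    S.distOrth (T.par u) + 1 ≤ S.distOrth u := by
  obtain ⟨q, hqalt, hlen, -⟩ := par_edge S T hu
  have h1 : S.distOrth (T.par u) ≤ (q.length : ℕ∞) := distOrth_le_length S hqalt
  rw [← hlen]
  push_cast
  exact add_le_add_left h1 1

private lemma par_iterate_f (T : ABT S) (n : ℕ) : T.par^[n] S.f = S.f :=
  Function.iterate_fixed T.par_f n

private lemma not_inSub_f (T : ABT S) {t : V} (ht : t ≠ S.f) : ¬ T.inSub t S.f := by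
  rintro ⟨n, hn⟩
  rw [par_iterate_f S T n] at hn
  exact ht hn.symm

private lemma distOrth_sub_aux (T : ABT S) {t : V} (ht : t ≠ S.f) :
    ∀ (n : ℕ) (w : V), T.par^[n] w = t →
      S.distOrth t ≤ S.distOrth w ∧ (w ≠ t → S.distOrth t + 1 ≤ S.distOrth w) := by
  intro n
  induction n with
  | zero => intro w hw; simp only [Function.iterate_zero, id] at hw; subst hw
            exact ⟨le_rfl, fun h => absurd rfl h⟩
  | succ n ih =>
      intro w hw
      have hwf : w ≠ S.f := by
        intro h; subst h
        rw [Function.iterate_succ_apply, T.par_f, par_iterate_f S T n] at hw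
        exact ht hw.symm
      rw [Function.iterate_succ_apply] at hw
      have hIH := (ih (T.par w) hw).1
      have hdesc := distOrth_par_succ_le S T hwf
      have h2 : S.distOrth t + 1 ≤ S.distOrth w :=
        le_trans (add_le_add_left hIH 1) hdesc
      exact ⟨le_trans (le_add_right le_rfl) h2, fun _ => h2⟩

private lemma distOrth_mono_sub (T : ABT S) {t w : V} (ht : t ≠ S.f) (hw : T.inSub t w) :
    S.distOrth t ≤ S.distOrth w := by
  obtain ⟨n, hn⟩ := hw
  exact (distOrth_sub_aux S T ht n w hn).1

private lemma distOrth_strict_sub (T : ABT S) {t w : V} (ht : t ≠ S.f) (hw : T.inSub t w)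
    (hne : w ≠ t) : S.distOrth t + 1 ≤ S.distOrth w := by
  obtain ⟨n, hn⟩ := hw
  exact (distOrth_sub_aux S T ht n w hn).2 hne

private lemma par_not_inSub (T : ABT S) {t : V} (ht : t ≠ S.f) : ¬ T.inSub t (T.par t) := by
  intro h
  have h1 : S.distOrth t ≤ S.distOrth (T.par t) := distOrth_mono_sub S T ht h
  have h2 := distOrth_par_succ_le S T ht
  have h3 : S.distOrth t + 1 ≤ S.distOrth t :=
    le_trans (add_le_add_left h1 1) h2
  have hne := distOrth_ne_top S T ht
  rw [ENat.add_one_le_iff hne] at h3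
  exact lt_irrefl _ h3

private lemma inSub_of_par {t z : V} (T : ABT S) (h : T.inSub t (T.par z)) : T.inSub t z := by
  obtain ⟨n, hn⟩ := h
  exact ⟨n + 1, by rw [Function.iterate_succ_apply]; exact hn⟩

private lemma crossing_not_tree (T : ABT S) {t y z : V} (ht : t ≠ S.f)
    (hty : ¬ T.inSub t y) (htz : T.inSub t z) (htree : T.IsTreeEdge s(y, z)) :
    z = t ∧ y = T.par t := by
  obtain ⟨u, huf, hu⟩ := htree
  rw [Sym2.eq_iff] at hu
  rcases hu with ⟨h1, h2⟩ | ⟨h1, h2⟩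
  · -- u = y, par u = z
    subst h1; subst h2
    exact absurd (inSub_of_par S T htz) hty
  · -- u = z, par u = y
    subst h1; subst h2
    obtain ⟨n, hn⟩ := htz
    cases n with
    | zero => simp only [Function.iterate_zero, id] at hn; exact ⟨hn, by rw [hn]⟩
    | succ n =>
        rw [Function.iterate_succ_apply] at hn
        exact absurd ⟨n, hn⟩ hty

private lemma path_self_eq_nil {t : V} (r : (S.G).Walk t t) (hr : r.IsPath) : r.length = 0 := by
  cases r with
  | nil => rfl
  | cons h q =>
      exfalso
      have hsup := hr.support_nodup
      rw [Walk.support_cons, List.nodup_cons] at hsup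
      exact hsup.1 q.end_mem_support

/-- Crossing decomposition: an alternating path from `f` ending in `T(t)` decomposes
at the last entry point into `T(t)`. -/
private lemma cross (T : ABT S) {t : V} (ht : t ≠ S.f) :
    ∀ (n : ℕ) {v : V} (p : (S.G).Walk S.f v), p.length = n → S.IsAltPath p → T.inSub t v →
    ∃ (y z : V) (hyz : S.G.Adj y z) (q : (S.G).Walk S.f y) (r : (S.G).Walk z v),
      ¬ T.inSub t y ∧ T.inSub t z ∧ p = q.append (Walk.cons hyz r) ∧
      (∀ w ∈ r.support, T.inSub t w) := by
  intro n
  induction n using Nat.strong_induction_on with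
  | _ n ih =>
    intro v p hlen halt hv
    have hvf : v ≠ S.f := by
      rintro rfl
      exact not_inSub_f S T ht hv
    have hplen : p.length ≠ 0 := by
      cases p with
      | nil => exact absurd rfl hvf
      | cons h q => simp
    obtain ⟨w, q₀, hadj, hpq⟩ := walk_last_decomp S p hplen
    by_cases hw : T.inSub t w
    · have hq₀lt : q₀.length < n := by
        rw [← hlen, hpq, Walk.length_append]
        simp
      obtain ⟨y, z, hyz, q, r, hy, hz, heq, hr⟩ :=
        ih q₀.length hq₀lt q₀ rfl (alt_of_append_left S (hpq ▸ halt)) hw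
      refine ⟨y, z, hyz, q, r.append (Walk.cons hadj Walk.nil), hy, hz, ?_, ?_⟩
      · rw [hpq, heq, ← Walk.append_assoc, Walk.cons_append]
      · intro x hx
        rw [Walk.support_append] at hx
        rcases List.mem_append.mp hx with hx | hx
        · exact hr x hx
        · simp only [Walk.support_cons, Walk.support_nil, List.tail_cons,
            List.mem_singleton] at hx
          subst hx; exact hv
    · refine ⟨w, v, hadj, q₀, Walk.nil, hw, hv, hpq, ?_⟩
      intro x hx
      simp only [Walk.support_nil, List.mem_singleton] at hx
      subst hx; exact hv

private lemma vlevel_mk (y z : V) :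
    S.vlevel s(y, z) = S.adist (S.rho s(y, z)) y + S.adist (S.rho s(y, z)) z + 1 := by
  unfold Sys.vlevel
  rw [Sym2.lift_mk]

private lemma hlevel_mk (y z : V) :
    S.hlevel s(y, z) = max (S.adist (S.rho s(y, z)) y) (S.adist (S.rho s(y, z)) z) := by
  unfold Sys.hlevel
  rw [Sym2.lift_mk]

private lemma rho_true_iff (e : Sym2 V) : (S.rho e = true) ↔ e ∈ S.M := by
  unfold Sys.rho
  split_ifs with h <;> simp [h]

end Aux


section Main

open SimpleGraph Walk List

variable {V : Type*} [Fintype V] [DecidableEq V] (S : Sys V)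

/-- Key upper bound: if `op t = true` and both levels of `t` are finite, then `T(t)` has an
incoming edge of volume at most `ℓ₀(t) + ℓ₁(t)`. -/
private lemma exists_incoming (T : ABT S) {t : V} (ht : t ≠ S.f) {n0 n1 : ℕ}
    (h0 : (n0 : ℕ∞) = S.adist false t) (h1 : (n1 : ℕ∞) = S.adist true t)
    (hop : S.op t = true) :
    ∃ e₀ : Sym2 V, T.Incoming t e₀ ∧ S.vlevel e₀ ≤ ((n0 + n1 : ℕ) : ℕ∞) := by
  classical
  -- attained shortest even and odd paths to t
  obtain ⟨P0, hP0alt, hP0len, hP0par⟩ := adist_attain S (θ := false) (u := t)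
    (by rw [← h0]; exact ENat.coe_ne_top _)
  obtain ⟨P1, hP1alt, hP1len, hP1par⟩ := adist_attain S (θ := true) (u := t)
    (by rw [← h1]; exact ENat.coe_ne_top _)
  have hP0n : P0.length = n0 := by
    have := hP0len.trans h0.symm; exact_mod_cast this
  have hP1n : P1.length = n1 := by
    have := hP1len.trans h1.symm; exact_mod_cast this
  have hn0even : ¬ Odd n0 := by rw [← hP0n]; simp only [hP0par]; simp
  have hn1odd : Odd n1 := by rw [← hP1n]; rw [hP1par]
  have hdOrth : S.distOrth t = S.adist true t := by
    unfold Sys.distOrth; rw [hop]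
  -- crossing decomposition of P0 at the last entry into T(t)
  obtain ⟨y, z, hyz, q, r, hy, hz, heq, hr⟩ :=
    cross S T ht P0.length P0 rfl hP0alt ⟨0, rfl⟩
  have hedges : P0.edges = q.edges ++ (s(y, z) :: r.edges) := by
    rw [heq, Walk.edges_append, Walk.edges_cons]
  have hlens : n0 = q.length + 1 + r.length := by
    rw [← hP0n, heq, Walk.length_append, Walk.length_cons]
    omega
  -- parity of the crossing edge
  have heM : s(y, z) ∈ S.M ↔ Odd q.length := by
    have := edge_parity S hP0alt hedges
    rwa [Walk.length_edges] at this
  set θ : Bool := S.rho s(y, z) with hθdef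
  have hθ : θ = true ↔ s(y, z) ∈ S.M := rho_true_iff S _
  have hqalt : S.IsAltPath q := alt_of_append_left S (heq ▸ hP0alt)
  have hAy : S.adist θ y ≤ (q.length : ℕ∞) :=
    adist_le S hqalt (by rw [hθ, heM])
  -- pieces of P0 inside T(t)
  have hconsalt : (cons hyz r).IsPath := (heq ▸ hP0alt.1).of_append_right
  have hrpath : r.IsPath := hconsalt.of_cons
  have hchainP0 := hP0alt.2
  rw [hedges] at hchainP0
  have hchainr : List.Chain' (AR S) r.edges :=
    (List.isChain_cons.mp (List.isChain_append.mp hchainP0).2.1).2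
  -- P1 avoids T(t) \ {t}
  have hP1disj : ∀ w ∈ P1.support, w ≠ t → ¬ T.inSub t w := by
    intro w hwsup hwt hsub
    have hpre : S.IsAltPath (P1.takeUntil w hwsup) := by
      refine ⟨hP1alt.1.takeUntil hwsup, ?_⟩
      have := hP1alt.2
      rw [← P1.take_spec hwsup, Walk.edges_append] at this
      exact (List.isChain_append.mp this).1
    have h1' : S.distOrth w ≤ ((P1.takeUntil w hwsup).length : ℕ∞) :=
      distOrth_le_length S hpre
    have h2' : ((P1.takeUntil w hwsup).length : ℕ∞) ≤ (n1 : ℕ∞) := by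
      exact_mod_cast (by rw [← hP1n]; exact P1.length_takeUntil_le hwsup :
        (P1.takeUntil w hwsup).length ≤ n1)
    have h3' : S.distOrth t + 1 ≤ S.distOrth w := distOrth_strict_sub S T ht hsub hwt
    have h4' : ((n1 : ℕ) : ℕ∞) + 1 ≤ (n1 : ℕ∞) := by
      calc ((n1 : ℕ) : ℕ∞) + 1 = S.distOrth t + 1 := by rw [hdOrth, h1]
        _ ≤ S.distOrth w := h3'
        _ ≤ (n1 : ℕ∞) := le_trans h1' h2'
    have : (((n1 + 1 : ℕ)) : ℕ∞) ≤ ((n1 : ℕ) : ℕ∞) := by push_cast; exact h4'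
    rw [Nat.cast_le] at this
    omega
  -- the path Q := P1 ++ reverse of the suffix r
  set Q : (S.G).Walk S.f z := P1.append r.reverse with hQdef
  have hQsup : Q.support = P1.support ++ r.reverse.support.tail := Walk.support_append _ _
  have hQpath : Q.IsPath := by
    rw [Walk.isPath_def, hQsup]
    refine List.Nodup.append hP1alt.1.support_nodup ?_ ?_
    · exact ((hrpath.reverse).support_nodup).tail
    · intro w hw1 hw2
      have hrevsup : r.reverse.support = t :: r.reverse.support.tail :=
        Walk.support_eq_cons _
      have hwne : w ≠ t := by
        intro hwt; subst hwt
        have := (hrpath.reverse).support_nodup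
        rw [hrevsup, List.nodup_cons] at this
        exact this.1 hw2
      have hwmem : w ∈ r.support := by
        have : w ∈ r.reverse.support := by rw [hrevsup]; exact List.mem_cons_of_mem _ hw2
        rwa [Walk.support_reverse, List.mem_reverse] at this
      exact hP1disj w hw1 hwne (hr w hwmem)
  have hQedges : Q.edges = P1.edges ++ r.edges.reverse := by
    rw [hQdef, Walk.edges_append, Walk.edges_reverse]
  -- alternation of Q
  have hQchain : List.Chain' (AR S) Q.edges := by
    rw [hQedges]
    rw [List.Chain', List.isChain_append]
    refine ⟨hP1alt.2, ?_, ?_⟩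
    · rw [List.isChain_reverse]
      exact List.IsChain.imp (fun a b hab => by show AR S b a; tauto) hchainr
    · intro x hx y' hy'
      -- x is the last edge of P1
      have hn1pos : P1.length ≠ 0 := by rw [hP1n]; rintro rfl; simp at hn1odd
      obtain ⟨w1, q1, hadj1, hP1eq⟩ := walk_last_decomp S P1 hn1pos
      have hP1edges : P1.edges = q1.edges ++ [s(w1, t)] := by
        rw [hP1eq, Walk.edges_append, Walk.edges_cons, Walk.edges_nil]
      have hxval : x = s(w1, t) := by
        rw [hP1edges, List.getLast?_append_cons, List.getLast?_singleton] at hx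
        exact (Option.some.inj hx).symm
      have hq1len : q1.length + 1 = n1 := by
        rw [← hP1n, hP1eq, Walk.length_append]; simp
      have hxpar : x ∈ S.M ↔ Odd q1.length := by
        rw [hxval]
        have := edge_parity S hP1alt (l₁ := q1.edges) (l₂ := []) (e := s(w1, t))
          (by rw [hP1edges])
        rwa [Walk.length_edges] at this
      have hxnotM : x ∉ S.M := by
        rw [hxpar]
        simp only [Nat.odd_iff] at hn1odd ⊢
        omega
      -- y' is the last edge of r (and of P0)
      rw [List.head?_reverse] at hy'
      obtain ⟨l', hl'⟩ := getLast?_split hy'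
      have hP0split : P0.edges = (q.edges ++ s(y, z) :: l') ++ [y'] := by
        rw [hedges, hl']
        simp
      have hy'par : y' ∈ S.M ↔ Odd (q.edges ++ s(y, z) :: l').length :=
        edge_parity S hP0alt (l₂ := []) hP0split
      have hrlen : r.length = l'.length + 1 := by
        rw [← Walk.length_edges, hl', List.length_append]; simp
      have hy'M : y' ∈ S.M := by
        rw [hy'par]
        simp only [List.length_append, List.length_cons, Walk.length_edges]
        simp only [Nat.odd_iff] at hn0even ⊢
        omega
      show x ∈ S.M ↔ y' ∉ S.M
      exact iff_of_false hxnotM (not_not_intro hy'M)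
  have hQalt : S.IsAltPath Q := ⟨hQpath, hQchain⟩
  have hQlen : Q.length = n1 + r.length := by
    rw [hQdef, Walk.length_append, Walk.length_reverse, hP1n]
  have hQpar : Odd Q.length ↔ θ = true := by
    rw [hQlen, hθ, heM]
    simp only [Nat.odd_iff] at hn0even hn1odd ⊢
    omega
  have hAz : S.adist θ z ≤ ((n1 + r.length : ℕ) : ℕ∞) := by
    have := adist_le S hQalt hQpar
    rwa [hQlen] at this
  -- the crossing edge is not a tree edge
  have hnotree : ¬ T.IsTreeEdge s(y, z) := by
    intro htree
    obtain ⟨hzt, hypar⟩ := crossing_not_tree S T ht hy hz htree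
    subst hzt
    have hr0 : r.length = 0 := path_self_eq_nil S r hrpath
    have hqlen : q.length + 1 = n0 := by omega
    have hMyz : s(y, z) ∈ S.M := by
      rw [heM]
      simp only [Nat.odd_iff] at hn0even ⊢
      omega
    -- but the tree edge of t is unmatched
    obtain ⟨qt, -, hlent, hpart⟩ := par_edge S T ht
    have hlent' : qt.length + 1 = n1 := by
      have : ((qt.length + 1 : ℕ) : ℕ∞) = ((n1 : ℕ) : ℕ∞) := by
        rw [hlent, hdOrth, h1]
      exact_mod_cast this
    have htreeM : s(T.par z, z) ∉ S.M := by
      rw [hpart]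
      simp only [Nat.odd_iff] at hn1odd ⊢
      omega
    rw [hypar] at hMyz
    exact htreeM hMyz
  refine ⟨s(y, z), ⟨(S.G.mem_edgeSet).mpr hyz, hnotree, y, z, rfl, hz, hy⟩, ?_⟩
  rw [vlevel_mk, ← hθdef]
  calc S.adist θ y + S.adist θ z + 1
      ≤ (q.length : ℕ∞) + ((n1 + r.length : ℕ) : ℕ∞) + 1 :=
        add_le_add_left (add_le_add hAy hAz) 1
    _ = ((q.length + (n1 + r.length) + 1 : ℕ) : ℕ∞) := by push_cast; ring
    _ = ((n0 + n1 : ℕ) : ℕ∞) := by congr 1; omega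

/-- From `level` minimality to `vlevel` comparison. -/
private lemma vlevel_le_of_level_le {e₁ e₂ : Sym2 V} (h : S.level e₁ ≤ S.level e₂)
    (h₂v : S.vlevel e₂ ≠ ⊤) (h₂h : S.hlevel e₂ < (((Fintype.card V + 1 : ℕ)) : ℕ∞)) :
    S.vlevel e₁ ≤ S.vlevel e₂ := by
  by_contra hc
  push_neg at hc
  have hsucc : S.vlevel e₂ + 1 ≤ S.vlevel e₁ := (ENat.add_one_le_iff h₂v).mpr hc
  set C : ℕ∞ := ((Fintype.card V + 1 : ℕ) : ℕ∞) with hC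
  have hCne : C ≠ ⊤ := ENat.coe_ne_top _
  have hlev2 : S.level e₂ < C * (S.vlevel e₂ + 1) := by
    unfold Sys.level
    rw [mul_add, mul_one]
    exact WithTop.add_lt_add_left (WithTop.mul_ne_top hCne h₂v) h₂h
  have hlev1 : C * (S.vlevel e₂ + 1) ≤ S.level e₁ := by
    unfold Sys.level
    exact le_trans (mul_le_mul_right hsucc C) le_self_add
  exact absurd h (not_le.mpr (lt_of_lt_of_le hlev2 hlev1))

private lemma hlevel_lt_card {e : Sym2 V} (h : S.vlevel e ≠ ⊤) :
    S.hlevel e < ((Fintype.card V : ℕ) : ℕ∞) := by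
  induction e using Sym2.ind with
  | _ a b =>
    rw [vlevel_mk] at h
    rw [hlevel_mk]
    have ha : S.adist (S.rho s(a, b)) a ≠ ⊤ := by
      intro h'; rw [h'] at h; simp at h
    have hb : S.adist (S.rho s(a, b)) b ≠ ⊤ := by
      intro h'; rw [h'] at h; simp at h
    exact max_lt (adist_lt_card S ha) (adist_lt_card S hb)

/-- Lower bound: every edge incident to a vertex of distOrth at least `n0 + 1`
has volume at least `2*n0 + 2`. -/
private lemma vlevel_lower {x : V} {e : Sym2 V} (hedge : e ∈ S.G.edgeSet) (hx : x ∈ e)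
    {n0 : ℕ} (hd : ((n0 : ℕ∞) + 1) ≤ S.distOrth x) :
    ((2 * n0 + 2 : ℕ) : ℕ∞) ≤ S.vlevel e := by
  classical
  obtain ⟨x₂, rfl⟩ := Sym2.mem_iff_exists.mp hx
  have hadj : S.G.Adj x x₂ := (S.G.mem_edgeSet).mp hedge
  set θ : Bool := S.rho s(x, x₂) with hθdef
  have hθ : θ = true ↔ s(x, x₂) ∈ S.M := rho_true_iff S _
  rw [vlevel_mk, ← hθdef]
  have hA : (n0 : ℕ∞) + 1 ≤ S.adist θ x := le_trans hd (distOrth_le_adist S θ x)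
  by_cases hB : S.adist θ x₂ = ⊤
  · rw [hB]
    simp
  obtain ⟨Q, hQalt, hQlen, hQpar⟩ := adist_attain S hB
  set m : ℕ := Q.length with hm
  by_cases hxQ : x ∈ Q.support
  · -- x already on Q: its prefix gives distOrth x ≤ m
    have hpre : S.IsAltPath (Q.takeUntil x hxQ) := by
      refine ⟨hQalt.1.takeUntil hxQ, ?_⟩
      have := hQalt.2
      rw [← Q.take_spec hxQ, Walk.edges_append] at this
      exact (List.isChain_append.mp this).1
    have h1' : S.distOrth x ≤ ((Q.takeUntil x hxQ).length : ℕ∞) :=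
      distOrth_le_length S hpre
    have h2' : ((Q.takeUntil x hxQ).length : ℕ∞) ≤ (m : ℕ∞) := by
      exact_mod_cast Q.length_takeUntil_le hxQ
    have hBval : (m : ℕ∞) ≤ S.adist θ x₂ := le_of_eq hQlen
    calc ((2 * n0 + 2 : ℕ) : ℕ∞) = ((n0 : ℕ∞) + 1) + ((n0 : ℕ∞) + 1) := by push_cast; ring
      _ ≤ S.adist θ x + (m : ℕ∞) :=
          add_le_add hA (le_trans hd (le_trans h1' h2'))
      _ ≤ S.adist θ x + S.adist θ x₂ := add_le_add_right hBval _
      _ ≤ S.adist θ x + S.adist θ x₂ + 1 := le_self_add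
  · -- extend Q by the edge (x₂, x)
    set Q' : (S.G).Walk S.f x := Q.append (Walk.cons hadj.symm Walk.nil) with hQ'def
    have hQ'path : Q'.IsPath := by
      rw [Walk.isPath_def, Walk.support_append]
      simp only [Walk.support_cons, Walk.support_nil, List.tail_cons]
      refine List.Nodup.append hQalt.1.support_nodup (List.nodup_singleton x) ?_
      intro w hw1 hw2
      rw [List.mem_singleton] at hw2
      subst hw2
      exact hxQ hw1
    have hQ'chain : List.Chain' (AR S) Q'.edges := by
      rw [hQ'def, Walk.edges_append, Walk.edges_cons, Walk.edges_nil]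
      rw [List.Chain', List.isChain_append]
      refine ⟨hQalt.2, List.isChain_singleton _, ?_⟩
      intro a ha b hb
      simp only [List.head?_cons, Option.mem_def, Option.some.injEq] at hb
      subst hb
      obtain ⟨l', hl'⟩ := getLast?_split ha
      have hsplit : Q.edges = l' ++ a :: [] := by rw [hl']
      have hapar : a ∈ S.M ↔ Odd l'.length := edge_parity S hQalt hsplit
      have hmlen : m = l'.length + 1 := by
        rw [hm, ← Walk.length_edges, hl']; simp
      have hepar : s(x₂, x) ∈ S.M ↔ Odd m := by
        rw [Sym2.eq_swap]
        rw [← hθ, hQpar]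
      show a ∈ S.M ↔ s(x₂, x) ∉ S.M
      rw [hapar, hepar]
      simp only [Nat.odd_iff]
      omega
    have hQ'alt : S.IsAltPath Q' := ⟨hQ'path, hQ'chain⟩
    have hQ'len : Q'.length = m + 1 := by
      rw [hQ'def, Walk.length_append]; simp [hm]
    have h1' : S.distOrth x ≤ ((m + 1 : ℕ) : ℕ∞) := by
      have := distOrth_le_length S hQ'alt
      rwa [hQ'len] at this
    have hge : (n0 : ℕ∞) ≤ (m : ℕ∞) := by
      have : ((n0 + 1 : ℕ) : ℕ∞) ≤ ((m + 1 : ℕ) : ℕ∞) := by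
        push_cast
        exact le_trans hd (le_trans h1' (by push_cast; exact le_rfl))
      rw [Nat.cast_le] at this
      rw [Nat.cast_le]
      omega
    have hBval : (m : ℕ∞) ≤ S.adist θ x₂ := le_of_eq hQlen
    calc ((2 * n0 + 2 : ℕ) : ℕ∞) = ((n0 : ℕ∞) + 1) + (n0 : ℕ∞) + 1 := by push_cast; ring
      _ ≤ S.adist θ x + S.adist θ x₂ + 1 :=
          add_le_add_left (add_le_add hA (le_trans hge hBval)) 1

end Main

/-- Let `t` have odd orthodox parity, `t'` be a child of `t` with `{t,t'} ∉ M`, and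
`e` any edge of `G` incident to a vertex of the subtree `T(t')`.  Then
`vlevel(e) > vlevel(e*(t))` (hence also `level(e) > level(e*(t))`) for any
minimum-level incoming edge `e*(t)` of `T(t)`. -/
theorem stmt8 (S : Sys V) (T : ABT S) (t t' : V)
    (hchild : t' ≠ S.f ∧ T.par t' = t) (hα : S.op t = true)
    (hm : s(t, t') ∉ S.M)
    (e : Sym2 V) (hedge : e ∈ S.G.edgeSet) (x : V) (hx : x ∈ e) (hsub : T.inSub t' x)
    (estar : Sym2 V) (hestar : T.IsMIE t estar) :
    S.vlevel estar < S.vlevel e ∧ S.level estar < S.level e := by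
  classical
  obtain ⟨ht'f, hpar⟩ := hchild
  subst hpar
  -- `t = T.par t'` is not the super free vertex
  have htf : T.par t' ≠ S.f := by
    intro hf
    rw [hf] at hα
    have hnil : S.IsAltPath (Walk.nil : S.G.Walk S.f S.f) := ⟨Walk.IsPath.nil, List.isChain_nil⟩
    have h0 : S.adist false S.f ≤ ((Walk.nil : S.G.Walk S.f S.f).length : ℕ∞) :=
      adist_le S hnil (by simp)
    simp only [Walk.length_nil, Nat.cast_zero] at h0
    have hnlt : ¬ (S.adist true S.f < S.adist false S.f) := fun hlt =>
      (not_le.mpr (lt_of_lt_of_le hlt h0)) zero_le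
    unfold Sys.op at hα
    rw [if_neg hnlt] at hα
    simp at hα
  -- the tree edge to `t'` gives an even alternating path to `t`
  obtain ⟨q', hq'alt, hq'len, hq'par⟩ := par_edge S T ht'f
  have hq'even : ¬ Odd q'.length := fun h => hm (hq'par.mpr h)
  have hl0le : S.adist false (T.par t') ≤ (q'.length : ℕ∞) :=
    adist_le S hq'alt (by simp [hq'even])
  have hl0top : S.adist false (T.par t') ≠ ⊤ :=
    ne_top_of_le_ne_top (ENat.coe_ne_top _) hl0le
  have hlt : S.adist true (T.par t') < S.adist false (T.par t') := by
    by_contra h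
    unfold Sys.op at hα
    rw [if_neg h] at hα
    simp at hα
  have hl1top : S.adist true (T.par t') ≠ ⊤ := hlt.ne_top
  obtain ⟨n0, h0⟩ : ∃ n : ℕ, (n : ℕ∞) = S.adist false (T.par t') :=
    ⟨(S.adist false (T.par t')).toNat, ENat.coe_toNat hl0top⟩
  obtain ⟨n1, h1⟩ : ∃ n : ℕ, (n : ℕ∞) = S.adist true (T.par t') :=
    ⟨(S.adist true (T.par t')).toNat, ENat.coe_toNat hl1top⟩
  have hn1ltn0 : n1 < n0 := by
    have := hlt
    rw [← h0, ← h1] at this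
    exact_mod_cast this
  -- upper bound via the minimum-level incoming edge
  obtain ⟨e₀, hinc₀, hv₀⟩ := exists_incoming S T htf h0 h1 hα
  obtain ⟨hincstar, hminstar⟩ := hestar
  have hlev := hminstar e₀ hinc₀
  have hv₀top : S.vlevel e₀ ≠ ⊤ := ne_top_of_le_ne_top (ENat.coe_ne_top _) hv₀
  have hcardle : ((Fintype.card V : ℕ) : ℕ∞) ≤ ((Fintype.card V + 1 : ℕ) : ℕ∞) := by
    exact_mod_cast Nat.le_succ _
  have hh₀ : S.hlevel e₀ < ((Fintype.card V + 1 : ℕ) : ℕ∞) :=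
    lt_of_lt_of_le (hlevel_lt_card S hv₀top) hcardle
  have hvstar : S.vlevel estar ≤ ((n0 + n1 : ℕ) : ℕ∞) :=
    le_trans (vlevel_le_of_level_le S hlev hv₀top hh₀) hv₀
  -- lower bound on the volume of `e`
  have hn0q : n0 ≤ q'.length := by
    have := hl0le
    rw [← h0] at this
    exact_mod_cast this
  have hd1 : ((n0 : ℕ∞) + 1) ≤ S.distOrth t' := by
    rw [← hq'len]
    have : ((n0 + 1 : ℕ) : ℕ∞) ≤ ((q'.length + 1 : ℕ) : ℕ∞) := by
      exact_mod_cast Nat.add_le_add_right hn0q 1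
    push_cast at this ⊢
    exact this
  have hdx : ((n0 : ℕ∞) + 1) ≤ S.distOrth x :=
    le_trans hd1 (distOrth_mono_sub S T ht'f hsub)
  have hlow : ((2 * n0 + 2 : ℕ) : ℕ∞) ≤ S.vlevel e := vlevel_lower S hedge hx hdx
  have hmid : ((n0 + n1 : ℕ) : ℕ∞) < ((2 * n0 + 2 : ℕ) : ℕ∞) := by
    rw [Nat.cast_lt]
    omega
  have hg1 : S.vlevel estar < S.vlevel e :=
    lt_of_le_of_lt hvstar (lt_of_lt_of_le hmid hlow)
  refine ⟨hg1, ?_⟩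
  -- lexicographic comparison for `level`
  have hvstartop : S.vlevel estar ≠ ⊤ := ne_top_of_le_ne_top (ENat.coe_ne_top _) hvstar
  have hhstar : S.hlevel estar < ((Fintype.card V + 1 : ℕ) : ℕ∞) :=
    lt_of_lt_of_le (hlevel_lt_card S hvstartop) hcardle
  set C : ℕ∞ := ((Fintype.card V + 1 : ℕ) : ℕ∞) with hC
  have hCne : C ≠ ⊤ := ENat.coe_ne_top _
  have hstep1 : S.level estar < C * (S.vlevel estar + 1) := by
    unfold Sys.level
    rw [mul_add, mul_one]
    exact WithTop.add_lt_add_left (WithTop.mul_ne_top hCne hvstartop) hhstar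
  have hstep2 : C * (S.vlevel estar + 1) ≤ C * S.vlevel e :=
    mul_le_mul_right ((ENat.add_one_le_iff hvstartop).mpr hg1) C
  have hstep3 : C * S.vlevel e ≤ S.level e := by
    unfold Sys.level
    exact le_self_add
  exact lt_of_lt_of_le hstep1 (le_trans hstep2 hstep3)
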